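/- arXiv:2105.12664 — 2 statements merged into one kernel-verified Lean document; each statement's English description precedes it below -/
import Mathlib

section
/- Let A be an n-by-n reciprocal matrix (n ≥ 2) and let θ ∈ ℝ. The Hermitian matrix Re(e^{iθ}A) has an eigenvalue of algebraic multiplicity at least 2 if and only if cos θ = 0 and there exists k ∈ {1, …, n−1} with ξ_k = 0 such that the upper-left k-by-k principal submatrix and the lower-right (n−k)-by-(n−k) principal submatrix of Im A have a common eigenvalue. (Equivalently: all multiple tangent lines of the Kippenhahn curve of A are horizontal, and they occur exactly under the stated condition.) -/
open Matrix Polynomial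

/-- A tridiagonal complex matrix with zero main diagonal whose symmetric
off-diagonal entries have pairwise products equal to one. -/
def IsReciprocal {n : ℕ} (A : Matrix (Fin n) (Fin n) ℂ) : Prop :=
  (∀ i j : Fin n, ((i : ℤ) - (j : ℤ)) ^ 2 ≠ 1 → A i j = 0) ∧
  ∀ i j : Fin n, (j : ℕ) = (i : ℕ) + 1 → A i j * A j i = 1

/-- The Hermitian matrix `Re (e^{iθ} A) = (e^{iθ}A + (e^{iθ}A)*)/2`. -/
noncomputable def RePart {n : ℕ} (θ : ℝ) (A : Matrix (Fin n) (Fin n) ℂ) :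
    Matrix (Fin n) (Fin n) ℂ :=
  (2 : ℂ)⁻¹ • (Complex.exp (θ * Complex.I) • A + (Complex.exp (θ * Complex.I) • A)ᴴ)

/-- The Hermitian matrix `Im A = (A - A*)/(2i)`. -/
noncomputable def imPart {n : ℕ} (A : Matrix (Fin n) (Fin n) ℂ) :
    Matrix (Fin n) (Fin n) ℂ :=
  (2 * Complex.I)⁻¹ • (A - Aᴴ)

/-- Upper-left `k`-by-`k` principal submatrix. -/
def ulBlock {n : ℕ} (M : Matrix (Fin n) (Fin n) ℂ) (k : ℕ) (hk : k ≤ n) :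
    Matrix (Fin k) (Fin k) ℂ :=
  M.submatrix (Fin.castLE hk) (Fin.castLE hk)

/-- Lower-right `(n-k)`-by-`(n-k)` principal submatrix. -/
def lrBlock {n : ℕ} (M : Matrix (Fin n) (Fin n) ℂ) (k : ℕ) (hk : k ≤ n) :
    Matrix (Fin (n - k)) (Fin (n - k)) ℂ :=
  fun i j => M ⟨k + i.1, by have := i.2; omega⟩ ⟨k + j.1, by have := j.2; omega⟩

set_option linter.unusedVariables false
set_option maxHeartbeats 1000000


section Helpers
variable {α : Type*} [Fintype α] [DecidableEq α]

lemma eval_charpoly' (M : Matrix α α ℂ) (μ : ℂ) :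
    M.charpoly.eval μ = (μ • (1 : Matrix α α ℂ) - M).det := by
  rw [Matrix.charpoly, ← Polynomial.coe_evalRingHom, RingHom.map_det]
  congr 1
  ext i j
  by_cases h : i = j
  · subst h
    simp [charmatrix_apply_eq, Matrix.one_apply]
  · simp [charmatrix_apply_ne _ _ _ h, Matrix.one_apply_ne h]

lemma mem_spectrum_iff_isRoot (M : Matrix α α ℂ) (μ : ℂ) :
    μ ∈ spectrum ℂ M ↔ M.charpoly.IsRoot μ := by
  rw [spectrum.mem_iff, Matrix.isUnit_iff_isUnit_det, isUnit_iff_ne_zero, not_ne_iff,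
    Polynomial.IsRoot, eval_charpoly']
  congr! 2
  rw [Algebra.algebraMap_eq_smul_one]

lemma charpoly_conj' (U V D : Matrix α α ℂ)
    (hUV : U * V = 1) (hVU : V * U = 1) : (U * D * V).charpoly = D.charpoly := by
  have hcomm : Commute (scalar α (X : ℂ[X])) (C.mapMatrix V) :=
    Matrix.scalar_commute _ (fun r' => Commute.all _ _) _
  have hc : charmatrix (U * D * V) = C.mapMatrix U * charmatrix D * C.mapMatrix V := by
    unfold charmatrix
    rw [Matrix.mul_sub, Matrix.sub_mul, _root_.map_mul, _root_.map_mul]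
    congr 1
    rw [mul_assoc, hcomm.eq, ← mul_assoc, ← _root_.map_mul, hUV]
    simp
  rw [Matrix.charpoly, Matrix.charpoly, hc, det_mul, det_mul]
  have : (C.mapMatrix U).det * (C.mapMatrix V).det = 1 := by
    rw [mul_comm, ← Matrix.det_mul, ← _root_.map_mul, hVU]
    simp
  calc (C.mapMatrix U).det * (charmatrix D).det * (C.mapMatrix V).det
      = ((C.mapMatrix U).det * (C.mapMatrix V).det) * (charmatrix D).det := by ring
    _ = (charmatrix D).det := by rw [this, one_mul]

end Helpers


section H2
variable {m : ℕ}

lemma diag_charpoly (w : Fin m → ℂ) : (diagonal w).charpoly = ∏ i, (X - C (w i)) := by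
  rw [charpoly_of_upperTriangular _ (blockTriangular_diagonal w)]
  simp

lemma herm_key {M : Matrix (Fin m) (Fin m) ℂ} (hM : M.IsHermitian) (μ : ℂ) :
    (μ • (1 : Matrix (Fin m) (Fin m) ℂ) - M).rank + M.charpoly.rootMultiplicity μ = m := by
  classical
  set U : Matrix (Fin m) (Fin m) ℂ := (hM.eigenvectorUnitary : Matrix (Fin m) (Fin m) ℂ) with hU
  set w : Fin m → ℂ := RCLike.ofReal ∘ hM.eigenvalues with hw
  have hUV : U * star U = 1 := mem_unitaryGroup_iff.mp (hM.eigenvectorUnitary).2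
  have hVU : star U * U = 1 := mem_unitaryGroup_iff'.mp (hM.eigenvectorUnitary).2
  have hdecomp : M = U * diagonal w * star U := hM.spectral_theorem
  have hdetU : IsUnit U.det := by
    refine IsUnit.of_mul_eq_one (star U).det ?_
    rw [← det_mul, hUV, det_one]
  have hdetV : IsUnit (star U).det := by
    refine IsUnit.of_mul_eq_one U.det ?_
    rw [← det_mul, hVU, det_one]
  have hcp : M.charpoly = ∏ i, (X - C (w i)) := by
    rw [hdecomp, charpoly_conj' _ _ _ hUV hVU, diag_charpoly]
  have hmult : M.charpoly.rootMultiplicity μ =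
      (Finset.univ.filter (fun i => w i = μ)).card := by
    have hprod : (∏ i, (X - C (w i))) =
        ((Finset.univ.val.map w).map (fun a => X - C a)).prod := by
      rw [Multiset.map_map]
      rfl
    rw [hcp, ← Polynomial.count_roots, hprod, roots_multiset_prod_X_sub_C,
      Multiset.count_map]
    rw [← Finset.filter_val, Finset.card_def]
    congr 2
    ext i
    simp [eq_comm]
  have hrank : (μ • (1 : Matrix (Fin m) (Fin m) ℂ) - M).rank =
      (Finset.univ.filter (fun i => ¬ (w i = μ))).card := by
    have hdiag : μ • (1 : Matrix (Fin m) (Fin m) ℂ) - M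
        = U * diagonal (fun i => μ - w i) * star U := by
      rw [hdecomp]
      rw [show diagonal (fun i => μ - w i)
          = μ • (1 : Matrix (Fin m) (Fin m) ℂ) - diagonal w by
        rw [smul_one_eq_diagonal, diagonal_sub]]
      rw [Matrix.mul_sub, Matrix.sub_mul, Matrix.mul_smul, Matrix.mul_one,
        Matrix.smul_mul, hUV]
    rw [hdiag, rank_mul_eq_left_of_isUnit_det _ _ hdetV,
      rank_mul_eq_right_of_isUnit_det _ _ hdetU, rank_diagonal]
    rw [Fintype.card_subtype]
    congr 1
    ext i
    have hiff : (μ - w i = 0) ↔ (w i = μ) := by rw [sub_eq_zero, eq_comm]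
    simp only [Finset.mem_filter, Finset.mem_univ, true_and]
    exact not_congr hiff
  rw [hrank, hmult, add_comm]
  rw [Finset.card_filter_add_card_filter_not]
  simp

lemma jacobi_simple {M : Matrix (Fin m) (Fin m) ℂ}
    (hT : ∀ i j : Fin m, ((i : ℤ) - (j : ℤ)) ^ 2 ≠ 1 → M i j = 0)
    (hsub : ∀ i j : Fin m, (i : ℕ) = (j : ℕ) + 1 → M i j ≠ 0)
    (hM : M.IsHermitian) (μ : ℂ) : M.charpoly.rootMultiplicity μ ≤ 1 := by
  by_contra hcon
  push_neg at hcon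
  have h2 : 2 ≤ M.charpoly.rootMultiplicity μ := hcon
  have hne : M.charpoly ≠ 0 := (Matrix.charpoly_monic M).ne_zero
  have hdeg : M.charpoly.rootMultiplicity μ ≤ m := by
    have h := Polynomial.natDegree_le_of_dvd
      (Polynomial.pow_rootMultiplicity_dvd M.charpoly μ) hne
    simpa [Polynomial.natDegree_pow, Polynomial.natDegree_X_sub_C,
      Matrix.charpoly_natDegree_eq_dim] using h
  have hm2 : 2 ≤ m := le_trans h2 hdeg
  obtain ⟨m', rfl⟩ : ∃ m', m = m' + 1 := ⟨m - 1, by omega⟩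
  set B := μ • (1 : Matrix (Fin (m' + 1)) (Fin (m' + 1)) ℂ) - M with hB
  set T := B.submatrix Fin.succ Fin.castSucc with hT'
  have htri : T.BlockTriangular id := by
    intro i j hij
    simp only [id] at hij
    have h1 : M i.succ j.castSucc = 0 := by
      apply hT
      have hji : (j : ℕ) < (i : ℕ) := hij
      have hcs : ((j.castSucc : Fin (m' + 1)) : ℕ) = (j : ℕ) := rfl
      have hsc : ((i.succ : Fin (m' + 1)) : ℕ) = (i : ℕ) + 1 := rfl
      rw [hcs, hsc]
      push_cast
      intro hc
      have hji' : ((j : ℕ) : ℤ) < ((i : ℕ) : ℤ) := by exact_mod_cast hji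
      nlinarith [hc, hji']
    have h2 : (1 : Matrix (Fin (m' + 1)) (Fin (m' + 1)) ℂ) i.succ j.castSucc = 0 := by
      apply Matrix.one_apply_ne
      intro hc
      have := congrArg Fin.val hc
      simp [Fin.val_succ] at this
      omega
    simp [hT', hB, Matrix.sub_apply, Matrix.smul_apply, h1, h2]
  have hdetT : T.det ≠ 0 := by
    rw [det_of_upperTriangular htri]
    apply Finset.prod_ne_zero_iff.mpr
    intro i _
    have h1 : (1 : Matrix (Fin (m' + 1)) (Fin (m' + 1)) ℂ) i.succ i.castSucc = 0 := by
      apply Matrix.one_apply_ne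
      intro hc
      have := congrArg Fin.val hc
      simp [Fin.val_succ] at this
    have h2 : M i.succ i.castSucc ≠ 0 := by
      apply hsub
      simp [Fin.val_succ]
    simp [hT', hB, Matrix.sub_apply, Matrix.smul_apply, h1]
    exact h2
  have hrankT : T.rank = m' := by
    rw [Matrix.rank_of_isUnit T (Matrix.isUnit_iff_isUnit_det T |>.mpr
      (isUnit_iff_ne_zero.mpr hdetT))]
    simp
  have hfact : T = ((1 : Matrix (Fin (m' + 1)) (Fin (m' + 1)) ℂ).submatrix Fin.succ
      (Equiv.refl (Fin (m' + 1)))) * B * ((1 : Matrix (Fin (m' + 1)) (Fin (m' + 1)) ℂ).submatrix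
      (Equiv.refl (Fin (m' + 1))) Fin.castSucc) := by
    rw [Matrix.one_submatrix_mul, Matrix.mul_submatrix_one]
    simp [hT']
  have hle : T.rank ≤ B.rank := by
    rw [hfact]
    exact le_trans (Matrix.rank_mul_le_left _ _)
      (Matrix.rank_mul_le_right _ _)
  have := herm_key hM μ
  rw [← hB] at this
  omega

end H2

section Blocks
variable {m : ℕ}

def TriDiag {m : ℕ} (M : Matrix (Fin m) (Fin m) ℂ) : Prop :=
  ∀ i j : Fin m, ((i : ℤ) - (j : ℤ)) ^ 2 ≠ 1 → M i j = 0

lemma entry_congr (M : Matrix (Fin m) (Fin m) ℂ) {a b c d : ℕ}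
    (ha : a < m) (hb : b < m) (hc : c < m) (hd : d < m) (h1 : a = c) (h2 : b = d) :
    M ⟨a, ha⟩ ⟨b, hb⟩ = M ⟨c, hc⟩ ⟨d, hd⟩ := by subst h1; subst h2; rfl

lemma charpoly_congr {p q : ℕ} (h : p = q) {M : Matrix (Fin p) (Fin p) ℂ}
    {N : Matrix (Fin q) (Fin q) ℂ}
    (hMN : ∀ (i j : ℕ) (hip : i < p) (hjp : j < p) (hiq : i < q) (hjq : j < q),
      M ⟨i, hip⟩ ⟨j, hjp⟩ = N ⟨i, hiq⟩ ⟨j, hjq⟩) : M.charpoly = N.charpoly := by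
  subst h
  have : M = N := by
    ext ⟨i, hi⟩ ⟨j, hj⟩
    exact hMN i j hi hj hi hj
  rw [this]

lemma tri_ul {M : Matrix (Fin m) (Fin m) ℂ} (hT : TriDiag M) {k : ℕ} (hk : k ≤ m) :
    TriDiag (ulBlock M k hk) := by
  intro i j h
  exact hT _ _ (by simpa using h)

lemma herm_ul {M : Matrix (Fin m) (Fin m) ℂ} (hH : M.IsHermitian) {k : ℕ} (hk : k ≤ m) :
    (ulBlock M k hk).IsHermitian :=
  Matrix.IsHermitian.ext fun i j => hH.apply _ _

lemma tri_lr {M : Matrix (Fin m) (Fin m) ℂ} (hT : TriDiag M) {k : ℕ} (hk : k ≤ m) :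
    TriDiag (lrBlock M k hk) := by
  intro i j h
  apply hT
  have hcast : ((⟨k + i.1, by have := i.2; omega⟩ : Fin m) : ℤ) -
      ((⟨k + j.1, by have := j.2; omega⟩ : Fin m) : ℤ) = (i : ℤ) - (j : ℤ) := by
    push_cast
    ring
  rw [hcast]
  exact h

lemma herm_lr {M : Matrix (Fin m) (Fin m) ℂ} (hH : M.IsHermitian) {k : ℕ} (hk : k ≤ m) :
    (lrBlock M k hk).IsHermitian :=
  Matrix.IsHermitian.ext fun i j => hH.apply _ _

lemma charmatrix_submatrix_inj {k : ℕ} (M : Matrix (Fin m) (Fin m) ℂ) (f : Fin k → Fin m)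
    (hf : Function.Injective f) :
    charmatrix (M.submatrix f f) = (charmatrix M).submatrix f f := by
  ext i j : 1
  rw [Matrix.submatrix_apply]
  by_cases hij : i = j
  · subst hij
    rw [charmatrix_apply_eq, charmatrix_apply_eq, Matrix.submatrix_apply]
  · rw [charmatrix_apply_ne _ _ _ hij,
      charmatrix_apply_ne _ _ _ (fun h => hij (hf h)), Matrix.submatrix_apply]

lemma charpoly_blockSplit {M : Matrix (Fin m) (Fin m) ℂ} (hH : M.IsHermitian) (hT : TriDiag M)
    {k : ℕ} (h1 : 1 ≤ k) (hk : k < m) (hz : M ⟨k - 1, Nat.lt_of_le_of_lt (Nat.sub_le k 1) hk⟩ ⟨k, hk⟩ = 0) :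
    M.charpoly = (ulBlock M k hk.le).charpoly * (lrBlock M k hk.le).charpoly := by
  classical
  set p : Fin m → Prop := fun i => (i : ℕ) < k with hp
  have hzero : ∀ i, ¬ p i → ∀ j, p j → charmatrix M i j = 0 := by
    intro i hi j hj
    have hij : i ≠ j := fun h => hi (h ▸ hj)
    rw [charmatrix_apply_ne _ _ _ hij]
    have hMij : M i j = 0 := by
      by_cases hsq : ((i : ℤ) - (j : ℤ)) ^ 2 ≠ 1
      · exact hT i j hsq
      · push_neg at hsq
        rw [sq, mul_self_eq_one_iff] at hsq
        have hi' : ¬ ((i : ℕ) < k) := hi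
        have hj' : (j : ℕ) < k := hj
        rcases hsq with hsq | hsq
        · have hik : (i : ℕ) = k := by omega
          have hjk : (j : ℕ) = k - 1 := by omega
          have hieq : i = ⟨k, hk⟩ := Fin.ext hik
          have hjeq : j = ⟨k - 1, by omega⟩ := Fin.ext hjk
          rw [hieq, hjeq, ← hH.apply, hz, star_zero]
        · omega
    rw [hMij]
    simp
  have hdet := Matrix.twoBlockTriangular_det (charmatrix M) p hzero
  let e1 : Fin k ≃ {i : Fin m // p i} :=
    { toFun := fun j => ⟨Fin.castLE hk.le j, j.2⟩
      invFun := fun i => ⟨i.1.1, i.2⟩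
      left_inv := fun j => rfl
      right_inv := fun i => rfl }
  let e2 : Fin (m - k) ≃ {i : Fin m // ¬ p i} :=
    { toFun := fun j => ⟨⟨k + j.1, by have := j.2; omega⟩, by simp [hp]⟩
      invFun := fun i => ⟨i.1.1 - k, by
        have h2 := i.2
        have h3 := i.1.2
        simp [hp] at h2
        omega⟩
      left_inv := fun j => by
        apply Fin.ext
        simp
      right_inv := fun i => by
        apply Subtype.ext
        apply Fin.ext
        have h2 := i.2
        simp [hp] at h2
        simp
        omega }
  have hUL : (Matrix.toSquareBlockProp (charmatrix M) p).det = (ulBlock M k hk.le).charpoly := by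
    rw [← Matrix.det_submatrix_equiv_self e1 (Matrix.toSquareBlockProp (charmatrix M) p)]
    rw [Matrix.charpoly, show ulBlock M k hk.le
      = M.submatrix (Fin.castLE hk.le) (Fin.castLE hk.le) from rfl,
      charmatrix_submatrix_inj M _ (Fin.castLE_injective hk.le)]
    congr 1

  have hLR : (Matrix.toSquareBlockProp (charmatrix M) (fun i => ¬ p i)).det
      = (lrBlock M k hk.le).charpoly := by
    rw [← Matrix.det_submatrix_equiv_self e2
      (Matrix.toSquareBlockProp (charmatrix M) (fun i => ¬ p i))]
    have hsub : lrBlock M k hk.le = M.submatrix (fun j : Fin (m - k) =>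
        (⟨k + j.1, by have := j.2; omega⟩ : Fin m)) (fun j : Fin (m - k) =>
        (⟨k + j.1, by have := j.2; omega⟩ : Fin m)) := rfl
    have hinj : Function.Injective (fun j : Fin (m - k) =>
        (⟨k + j.1, by have := j.2; omega⟩ : Fin m)) := by
      intro a b hab
      have := congrArg Fin.val hab
      simp at this
      exact Fin.ext this
    rw [Matrix.charpoly, hsub, charmatrix_submatrix_inj M _ hinj]
    congr 1

  rw [Matrix.charpoly, hdet, hUL, hLR]

end Blocks


section Core
variable {m : ℕ}

lemma core_fwd : ∀ m : ℕ, ∀ M : Matrix (Fin m) (Fin m) ℂ, M.IsHermitian → TriDiag M →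
    (∃ μ : ℂ, 2 ≤ M.charpoly.rootMultiplicity μ) →
    ∃ k : ℕ, ∃ _h1 : 1 ≤ k, ∃ hk : k < m, M ⟨k - 1, Nat.lt_of_le_of_lt (Nat.sub_le k 1) hk⟩ ⟨k, hk⟩ = 0 ∧
      ∃ μ : ℂ, (ulBlock M k hk.le).charpoly.IsRoot μ ∧ (lrBlock M k hk.le).charpoly.IsRoot μ := by
  intro m
  induction m using Nat.strong_induction_on with
  | _ m IH =>
  intro M hH hT hmult
  obtain ⟨μ, hμ⟩ := hmult
  by_cases hJ : ∀ i j : Fin m, (i : ℕ) = (j : ℕ) + 1 → M i j ≠ 0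
  · exact absurd hμ (by have := jacobi_simple hT hJ hH μ; omega)
  · push_neg at hJ
    obtain ⟨i0, j0, hij0, hz0⟩ := hJ
    set k := (j0 : ℕ) + 1 with hkdef
    have h1k : 1 ≤ k := by omega
    have hkm : k < m := by have := i0.2; omega
    have hzdn : M ⟨k, hkm⟩ ⟨k - 1, Nat.lt_of_le_of_lt (Nat.sub_le k 1) hkm⟩ = 0 := by
      have hie : (⟨k, hkm⟩ : Fin m) = i0 := Fin.ext (show k = (i0 : ℕ) by omega)
      have hje : (⟨k - 1, Nat.lt_of_le_of_lt (Nat.sub_le k 1) hkm⟩ : Fin m) = j0 := Fin.ext (show k - 1 = (j0 : ℕ) by omega)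
      rw [hie, hje]
      exact hz0
    have hzup : M ⟨k - 1, Nat.lt_of_le_of_lt (Nat.sub_le k 1) hkm⟩ ⟨k, hkm⟩ = 0 := by
      rw [← hH.apply, hzdn, star_zero]
    have hsplit := charpoly_blockSplit hH hT h1k hkm hzup
    have hpne : (ulBlock M k hkm.le).charpoly ≠ 0 := (Matrix.charpoly_monic _).ne_zero
    have hqne : (lrBlock M k hkm.le).charpoly ≠ 0 := (Matrix.charpoly_monic _).ne_zero
    rw [hsplit, Polynomial.rootMultiplicity_mul (mul_ne_zero hpne hqne)] at hμ
    set a := (ulBlock M k hkm.le).charpoly.rootMultiplicity μ with ha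
    set b := (lrBlock M k hkm.le).charpoly.rootMultiplicity μ with hb
    rcases (show (1 ≤ a ∧ 1 ≤ b) ∨ 2 ≤ a ∨ 2 ≤ b by omega) with ⟨ha1, hb1⟩ | h2 | h2
    · exact ⟨k, h1k, hkm, hzup, μ, (Polynomial.rootMultiplicity_pos hpne).mp ha1,
        (Polynomial.rootMultiplicity_pos hqne).mp hb1⟩
    · obtain ⟨j, hj1, hjk, hzj, μ', hr1, hr2⟩ :=
        IH k hkm (ulBlock M k hkm.le) (herm_ul hH _) (tri_ul hT _) ⟨μ, h2⟩
      have hjm : j < m := hjk.trans hkm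
      refine ⟨j, hj1, hjm, ?_, μ', ?_, ?_⟩
      · exact hzj
      · have hcc : (ulBlock (ulBlock M k hkm.le) j hjk.le).charpoly
            = (ulBlock M j hjm.le).charpoly :=
          charpoly_congr rfl (fun i j' hip hjp hiq hjq => rfl)
        rw [← hcc]
        exact hr1
      · have hherm := herm_lr hH hjm.le
        have htri := tri_lr hT hjm.le
        have h1' : 1 ≤ k - j := by omega
        have hk' : k - j < m - j := by omega
        have hz' : (lrBlock M j hjm.le) ⟨k - j - 1, by omega⟩ ⟨k - j, hk'⟩ = 0 := by
          show M ⟨j + (k - j - 1), by omega⟩ ⟨j + (k - j), by omega⟩ = 0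
          rw [entry_congr M (a := j + (k - j - 1)) (b := j + (k - j)) (c := k - 1) (d := k)
            (by omega) (by omega) (by omega) hkm (by omega) (by omega)]
          exact hzup
        have hsplit2 := charpoly_blockSplit hherm htri h1' hk' hz'
        have hcc : (lrBlock (ulBlock M k hkm.le) j hjk.le).charpoly
            = (ulBlock (lrBlock M j hjm.le) (k - j) hk'.le).charpoly :=
          charpoly_congr rfl (fun i j' hip hjp hiq hjq => rfl)
        rw [Polynomial.IsRoot, hsplit2, Polynomial.eval_mul,
          show (ulBlock (lrBlock M j hjm.le) (k - j) hk'.le).charpoly.eval μ' = 0 from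
            hcc ▸ hr2, zero_mul]
    · obtain ⟨j, hj1, hjk, hzj, μ', hr1, hr2⟩ :=
        IH (m - k) (by omega) (lrBlock M k hkm.le) (herm_lr hH _) (tri_lr hT _) ⟨μ, h2⟩
      set K := k + j with hK
      have hKm : K < m := by omega
      have h1K : 1 ≤ K := by omega
      refine ⟨K, h1K, hKm, ?_, μ', ?_, ?_⟩
      · rw [entry_congr M (a := K - 1) (b := K) (c := k + (j - 1)) (d := k + j)
          (by omega) (by omega) (by omega) (by omega) (by omega) (by omega)]
        exact hzj
      · have hherm := herm_ul hH hKm.le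
        have htri := tri_ul hT hKm.le
        have hkK : k < K := by omega
        have hz' : (ulBlock M K hKm.le) ⟨k - 1, by omega⟩ ⟨k, hkK⟩ = 0 := hzup
        have hsplit2 := charpoly_blockSplit hherm htri h1k hkK hz'
        have hcc : (ulBlock (lrBlock M k hkm.le) j hjk.le).charpoly
            = (lrBlock (ulBlock M K hKm.le) k hkK.le).charpoly := by
          apply charpoly_congr (by omega)
          intro i j' hip hjp hiq hjq
          rfl
        rw [Polynomial.IsRoot, hsplit2, Polynomial.eval_mul,
          show (lrBlock (ulBlock M K hKm.le) k hkK.le).charpoly.eval μ' = 0 from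
            hcc ▸ hr1, mul_zero]
      · have hcc : (lrBlock (lrBlock M k hkm.le) j hjk.le).charpoly
            = (lrBlock M K hKm.le).charpoly := by
          apply charpoly_congr (by omega)
          intro i j' hip hjp hiq hjq
          show M ⟨k + (j + i), by omega⟩ ⟨k + (j + j'), by omega⟩
            = M ⟨K + i, by omega⟩ ⟨K + j', by omega⟩
          exact entry_congr M _ _ _ _ (by omega) (by omega)
        exact hcc ▸ hr2

lemma core_iff (M : Matrix (Fin m) (Fin m) ℂ) (hH : M.IsHermitian) (hT : TriDiag M) :
    (∃ μ : ℂ, 2 ≤ M.charpoly.rootMultiplicity μ) ↔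
    ∃ k : ℕ, ∃ _h1 : 1 ≤ k, ∃ hk : k < m, M ⟨k - 1, Nat.lt_of_le_of_lt (Nat.sub_le k 1) hk⟩ ⟨k, hk⟩ = 0 ∧
      ∃ μ : ℂ, μ ∈ spectrum ℂ (ulBlock M k hk.le) ∧ μ ∈ spectrum ℂ (lrBlock M k hk.le) := by
  constructor
  · intro h
    obtain ⟨k, h1, hk, hz, μ, hr1, hr2⟩ := core_fwd m M hH hT h
    exact ⟨k, h1, hk, hz, μ, (mem_spectrum_iff_isRoot _ _).mpr hr1,
      (mem_spectrum_iff_isRoot _ _).mpr hr2⟩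
  · rintro ⟨k, h1, hk, hz, μ, hs1, hs2⟩
    have hr1 := (mem_spectrum_iff_isRoot _ _).mp hs1
    have hr2 := (mem_spectrum_iff_isRoot _ _).mp hs2
    refine ⟨μ, ?_⟩
    have hpne : (ulBlock M k hk.le).charpoly ≠ 0 := (Matrix.charpoly_monic _).ne_zero
    have hqne : (lrBlock M k hk.le).charpoly ≠ 0 := (Matrix.charpoly_monic _).ne_zero
    rw [charpoly_blockSplit hH hT h1 hk hz,
      Polynomial.rootMultiplicity_mul (mul_ne_zero hpne hqne)]
    have h1' := (Polynomial.rootMultiplicity_pos hpne).mpr hr1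
    have h2' := (Polynomial.rootMultiplicity_pos hqne).mpr hr2
    omega

end Core

section MainAux
variable {m : ℕ}

lemma rePart_apply (θ : ℝ) (A : Matrix (Fin m) (Fin m) ℂ) (i j : Fin m) :
    RePart θ A i j = (2 : ℂ)⁻¹ * (Complex.exp (θ * Complex.I) * A i j +
      star (Complex.exp (θ * Complex.I) * A j i)) := by
  simp [RePart, Matrix.add_apply, Matrix.smul_apply, Matrix.conjTranspose_apply, smul_eq_mul]

lemma rePart_isHermitian (θ : ℝ) (A : Matrix (Fin m) (Fin m) ℂ) : (RePart θ A).IsHermitian := by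
  apply Matrix.IsHermitian.ext
  intro i j
  rw [rePart_apply, rePart_apply]
  rw [star_mul', star_add, star_star]
  rw [show star ((2:ℂ)⁻¹) = (2:ℂ)⁻¹ by norm_num]
  ring

lemma rePart_tri (θ : ℝ) {A : Matrix (Fin m) (Fin m) ℂ}
    (hT : ∀ i j : Fin m, ((i : ℤ) - (j : ℤ)) ^ 2 ≠ 1 → A i j = 0) :
    TriDiag (RePart θ A) := by
  intro i j h
  have h' : ((j : ℤ) - (i : ℤ)) ^ 2 ≠ 1 := by
    have heq : ((j : ℤ) - (i : ℤ)) ^ 2 = ((i : ℤ) - (j : ℤ)) ^ 2 := by ring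
    rw [heq]
    exact h
  rw [rePart_apply, hT i j h, hT j i h']
  simp

lemma key_zero_iff (θ : ℝ) (a b : ℂ) (hab : a * b = 1) :
    (2 : ℂ)⁻¹ * (Complex.exp (θ * Complex.I) * a + star (Complex.exp (θ * Complex.I) * b)) = 0 ↔
      (Real.cos θ = 0 ∧ (‖a‖ - ‖b‖) ^ 2 / 4 = 0) := by
  set e := Complex.exp ((θ : ℂ) * Complex.I) with he
  have h2 : ((2 : ℂ)⁻¹ : ℂ) ≠ 0 := by norm_num
  rw [mul_eq_zero, or_iff_right h2, ← Complex.normSq_eq_zero]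
  have hnse : Complex.normSq e = 1 := by
    rw [Complex.normSq_eq_norm_sq, he, Complex.norm_exp_ofReal_mul_I]
    norm_num
  have hre2 : (e * e).re = Real.cos (2 * θ) := by
    have hee : e * e = Complex.exp ((2 * θ : ℝ) * Complex.I) := by
      rw [he, ← Complex.exp_add]
      congr 1
      push_cast
      ring
    rw [hee, Complex.exp_ofReal_mul_I_re]
  have hxy : ‖a‖ * ‖b‖ = 1 := by
    rw [← norm_mul, hab, norm_one]
  have hkey : Complex.normSq (e * a + star (e * b)) =
      (‖a‖ - ‖b‖) ^ 2 + (2 * Real.cos θ) ^ 2 := by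
    rw [Complex.normSq_add, Complex.normSq_mul, hnse, one_mul, Complex.star_def,
      Complex.normSq_conj, Complex.normSq_mul, hnse, one_mul,
      show (starRingEnd ℂ) ((starRingEnd ℂ) (e * b)) = e * b from Complex.conj_conj _,
      show e * a * (e * b) = e * e * (a * b) from by ring, hab, mul_one, hre2,
      Complex.normSq_eq_norm_sq, Complex.normSq_eq_norm_sq, Real.cos_two_mul]
    nlinarith [hxy]
  rw [hkey]
  constructor
  · intro h
    have hc2 : (2 * Real.cos θ) ^ 2 = 0 := by
      nlinarith [sq_nonneg (‖a‖ - ‖b‖), sq_nonneg (2 * Real.cos θ)]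
    have hd2 : (‖a‖ - ‖b‖) ^ 2 = 0 := by
      nlinarith [sq_nonneg (‖a‖ - ‖b‖), sq_nonneg (2 * Real.cos θ)]
    constructor
    · have h0 : 2 * Real.cos θ = 0 := by
        have := (pow_eq_zero_iff (two_ne_zero)).mp hc2
        exact this
      linarith
    · rw [hd2]
      norm_num
  · rintro ⟨h1, h2'⟩
    have hd2 : (‖a‖ - ‖b‖) ^ 2 = 0 := by
      linarith [h2']
    rw [hd2, h1]
    ring

lemma rePart_eq_smul_imPart {θ : ℝ} (hc : Real.cos θ = 0) (A : Matrix (Fin m) (Fin m) ℂ) :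
    RePart θ A = (-(Real.sin θ) : ℂ) • imPart A := by
  have he : Complex.exp ((θ : ℂ) * Complex.I) = (Real.sin θ : ℂ) * Complex.I := by
    rw [Complex.exp_mul_I, ← Complex.ofReal_cos, ← Complex.ofReal_sin, hc]
    simp
  unfold RePart imPart
  rw [he, Matrix.conjTranspose_smul,
    show star ((Real.sin θ : ℂ) * Complex.I) = -((Real.sin θ : ℂ) * Complex.I) from by
      rw [star_mul', Complex.star_def, Complex.conj_I, Complex.conj_ofReal]
      ring]
  rw [neg_smul, ← sub_eq_add_neg, ← smul_sub, smul_smul, smul_smul]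
  congr 1
  rw [mul_inv, Complex.inv_I]
  ring

end MainAux


lemma spec_smul_iff {p : ℕ} (N : Matrix (Fin p) (Fin p) ℂ) {c : ℂ} (hc : c ≠ 0) (μ : ℂ) :
    μ ∈ spectrum ℂ (c • N) ↔ c⁻¹ * μ ∈ spectrum ℂ N := by
  have h := spectrum.smul_mem_smul_iff (a := N) (s := c⁻¹ * μ) (r := Units.mk0 c hc)
  have h1 : (Units.mk0 c hc) • (c⁻¹ * μ) = μ := by
    simp [Units.smul_def, mul_inv_cancel_left₀ hc]
  have h2 : (Units.mk0 c hc) • N = c • N := rfl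
  rw [h1, h2] at h
  exact h


/-- For a reciprocal matrix `A`, `Re (e^{iθ}A)` has a multiple eigenvalue iff
`cos θ = 0` and for some `k` one has `ξ_k = 0` while the upper-left `k`-by-`k`
and lower-right `(n-k)`-by-`(n-k)` principal submatrices of `Im A` share an
eigenvalue. -/
theorem rePart_multiple_eigenvalue_iff {n : ℕ} (hn : 2 ≤ n)
    (A : Matrix (Fin n) (Fin n) ℂ) (hA : IsReciprocal A) (θ : ℝ) :
    (∃ μ : ℂ, 2 ≤ (RePart θ A).charpoly.rootMultiplicity μ) ↔
      (Real.cos θ = 0 ∧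
        ∃ k : ℕ, ∃ _h1 : 1 ≤ k, ∃ hk : k < n,
          (‖A ⟨k - 1, by omega⟩ ⟨k, hk⟩‖ -
            ‖A ⟨k, hk⟩ ⟨k - 1, by omega⟩‖) ^ 2 / 4 = 0 ∧
          ∃ μ : ℂ,
            μ ∈ spectrum ℂ (ulBlock (imPart A) k hk.le) ∧
            μ ∈ spectrum ℂ (lrBlock (imPart A) k hk.le)) := by
  have hH := rePart_isHermitian θ A
  have hT := rePart_tri θ hA.1
  rw [core_iff (RePart θ A) hH hT]
  constructor
  · rintro ⟨k, h1, hk, hz, μ, hs1, hs2⟩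
    rw [rePart_apply] at hz
    obtain ⟨hcos, hxi⟩ := (key_zero_iff θ _ _ (hA.2 ⟨k - 1, by omega⟩ ⟨k, hk⟩
      (show k = k - 1 + 1 by omega))).mp hz
    refine ⟨hcos, k, h1, hk, hxi, ?_⟩
    have hsin : (-(Real.sin θ) : ℂ) ≠ 0 := by
      simp only [ne_eq, neg_eq_zero, Complex.ofReal_eq_zero]
      intro h
      have hpy := Real.sin_sq_add_cos_sq θ
      rw [h, hcos] at hpy
      norm_num at hpy
    have hre := rePart_eq_smul_imPart hcos A
    set c : ℂ := (-(Real.sin θ) : ℂ) with hc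
    have hu1 : ulBlock (RePart θ A) k hk.le = c • ulBlock (imPart A) k hk.le := by
      rw [hre]; rfl
    have hu2 : lrBlock (RePart θ A) k hk.le = c • lrBlock (imPart A) k hk.le := by
      rw [hre]; rfl
    rw [hu1, spec_smul_iff _ hsin] at hs1
    rw [hu2, spec_smul_iff _ hsin] at hs2
    exact ⟨c⁻¹ * μ, hs1, hs2⟩
  · rintro ⟨hcos, k, h1, hk, hxi, μ, hs1, hs2⟩
    have hsin : (-(Real.sin θ) : ℂ) ≠ 0 := by
      simp only [ne_eq, neg_eq_zero, Complex.ofReal_eq_zero]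
      intro h
      have hpy := Real.sin_sq_add_cos_sq θ
      rw [h, hcos] at hpy
      norm_num at hpy
    have hre := rePart_eq_smul_imPart hcos A
    set c : ℂ := (-(Real.sin θ) : ℂ) with hc
    have hu1 : ulBlock (RePart θ A) k hk.le = c • ulBlock (imPart A) k hk.le := by
      rw [hre]; rfl
    have hu2 : lrBlock (RePart θ A) k hk.le = c • lrBlock (imPart A) k hk.le := by
      rw [hre]; rfl
    refine ⟨k, h1, hk, ?_, c * μ, ?_, ?_⟩
    · rw [rePart_apply]
      exact (key_zero_iff θ _ _ (hA.2 ⟨k - 1, by omega⟩ ⟨k, hk⟩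
        (show k = k - 1 + 1 by omega))).mpr ⟨hcos, hxi⟩
    · rw [hu1, spec_smul_iff _ hsin, inv_mul_cancel_left₀ hsin]
      exact hs1
    · rw [hu2, spec_smul_iff _ hsin, inv_mul_cancel_left₀ hsin]
      exact hs2
end

section
/- Let A be a 5-by-5 reciprocal matrix such that ξ₁ = ξ₄ or ξ₁ − ξ₄ = 2(ξ₃ − ξ₂). Then for all θ, λ ∈ ℝ, writing ρ = cos²θ: det(Re(e^{iθ}A) − λI₅) = −λ·(λ² − (3ρ + c₁²))·(λ² − (ρ + c₂²)), where c₁² = ξ₂ + ξ₃ + (ξ₁ + ξ₄)/2 and c₂² = (ξ₁ + ξ₄)/2. (Thus the Kippenhahn curve of A consists of the origin and two concentric ellipses with foci ±√3 and ±1 and minor half-axes c₁ and c₂ respectively.) -/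
open Matrix Polynomial

lemma det5 (l b0 b1 b2 b3 c0 c1 c2 c3 : ℂ) :
    (!![-l, b0, 0, 0, 0;
        c0, -l, b1, 0, 0;
        0, c1, -l, b2, 0;
        0, 0, c2, -l, b3;
        0, 0, 0, c3, -l]).det =
    -l^5 + l^3*(b0*c0 + b1*c1 + b2*c2 + b3*c3)
      - l*((b0*c0)*(b2*c2) + (b0*c0)*(b3*c3) + (b1*c1)*(b3*c3)) := by
  simp [Matrix.det_succ_row_zero, Fin.sum_univ_succ, Fin.succAbove]
  ring

lemma mu (θ : ℝ) (a c : ℂ) (h : a * c = 1) (ξ : ℝ)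
    (hξ : ξ = (‖a‖ - ‖c‖)^2/4) :
    ((2:ℂ)⁻¹ * (Complex.exp (θ*Complex.I) * a + (starRingEnd ℂ) (Complex.exp (θ*Complex.I) * c))) *
    (starRingEnd ℂ) ((2:ℂ)⁻¹ * (Complex.exp (θ*Complex.I) * a + (starRingEnd ℂ) (Complex.exp (θ*Complex.I) * c)))
      = ((ξ + Real.cos θ^2 : ℝ) : ℂ) := by
  have habs : (‖a‖ : ℂ) * (‖c‖ : ℂ) = 1 := by
    norm_cast
    rw [← norm_mul, h, norm_one]
  have ha : a * (starRingEnd ℂ) a = ((‖a‖ : ℂ))^2 := by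
    rw [Complex.mul_conj, Complex.normSq_eq_norm_sq]; push_cast; ring
  have hcc : c * (starRingEnd ℂ) c = ((‖c‖ : ℂ))^2 := by
    rw [Complex.mul_conj, Complex.normSq_eq_norm_sq]; push_cast; ring
  have huv : (starRingEnd ℂ) a * (starRingEnd ℂ) c = 1 := by
    rw [← _root_.map_mul, h, _root_.map_one]
  have he : Complex.exp (↑θ*Complex.I) = (Real.cos θ : ℂ) + (Real.sin θ : ℂ) * Complex.I := by
    rw [Complex.exp_mul_I, ← Complex.ofReal_cos, ← Complex.ofReal_sin]
  have hs : ((Real.sin θ : ℂ))^2 = 1 - ((Real.cos θ : ℂ))^2 := by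
    have h2 : Real.sin θ ^ 2 = 1 - Real.cos θ ^ 2 := by
      have := Real.sin_sq_add_cos_sq θ; linarith
    exact_mod_cast congrArg (Complex.ofReal) h2
  have hI : Complex.I^2 = -1 := Complex.I_sq
  have hxi : (ξ : ℂ) = ((‖a‖ : ℂ) - (‖c‖ : ℂ))^2/4 := by
    rw [hξ]; push_cast; ring
  have hrhs : ((ξ + Real.cos θ^2 : ℝ) : ℂ) = (ξ:ℂ) + ((Real.cos θ : ℂ))^2 := by
    push_cast; ring
  rw [hrhs]
  simp only [he, _root_.map_mul, _root_.map_add, map_inv₀, map_neg, Complex.conj_conj,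
    Complex.conj_I, Complex.conj_ofReal, map_ofNat]
  set C := (Real.cos θ : ℂ)
  set S := (Real.sin θ : ℂ)
  set X := (‖a‖ : ℂ)
  set Y := (‖c‖ : ℂ)
  linear_combination (4⁻¹*(C^2-S^2*Complex.I^2)) * ha + (4⁻¹*(C^2-S^2*Complex.I^2)) * hcc
    + (4⁻¹*(C+S*Complex.I)^2) * h + (4⁻¹*(C-S*Complex.I)^2) * huv
    + (-4⁻¹*S^2*(X^2+Y^2) + 2⁻¹*S^2) * hI
    + (4⁻¹*(X^2+Y^2) - 2⁻¹) * hs + (-1 : ℂ) * hxi + 2⁻¹ * habs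

set_option maxHeartbeats 1000000 in
/-- Under condition (5), the Kippenhahn polynomial of a 5-by-5 reciprocal matrix
factors, so that its Kippenhahn curve consists of the origin and two concentric
ellipses. -/
theorem concentric_factorization_five (A : Matrix (Fin 5) (Fin 5) ℂ) (hA : IsReciprocal A)
    (ξ₁ ξ₂ ξ₃ ξ₄ : ℝ)
    (h1 : ξ₁ = (‖A 0 1‖ - ‖A 1 0‖) ^ 2 / 4)
    (h2 : ξ₂ = (‖A 1 2‖ - ‖A 2 1‖) ^ 2 / 4)
    (h3 : ξ₃ = (‖A 2 3‖ - ‖A 3 2‖) ^ 2 / 4)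
    (h4 : ξ₄ = (‖A 3 4‖ - ‖A 4 3‖) ^ 2 / 4)
    (hcon : ξ₁ = ξ₄ ∨ ξ₁ - ξ₄ = 2 * (ξ₃ - ξ₂)) :
    ∀ θ lam : ℝ,
      (RePart θ A - (lam : ℂ) • 1).det =
        ((-lam * ((lam ^ 2 - (3 * Real.cos θ ^ 2 + (ξ₂ + ξ₃ + (ξ₁ + ξ₄) / 2))) *
            (lam ^ 2 - (Real.cos θ ^ 2 + (ξ₁ + ξ₄) / 2))) : ℝ) : ℂ) := by
  obtain ⟨hz, hp⟩ := hA
  intro θ lam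
  have z00 : A 0 0 = 0 := hz 0 0 (by decide)
  have z11 : A 1 1 = 0 := hz 1 1 (by decide)
  have z22 : A 2 2 = 0 := hz 2 2 (by decide)
  have z33 : A 3 3 = 0 := hz 3 3 (by decide)
  have z44 : A 4 4 = 0 := hz 4 4 (by decide)
  have z02 : A 0 2 = 0 := hz 0 2 (by decide)
  have z20 : A 2 0 = 0 := hz 2 0 (by decide)
  have z13 : A 1 3 = 0 := hz 1 3 (by decide)
  have z31 : A 3 1 = 0 := hz 3 1 (by decide)
  have z24 : A 2 4 = 0 := hz 2 4 (by decide)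
  have z42 : A 4 2 = 0 := hz 4 2 (by decide)
  have z03 : A 0 3 = 0 := hz 0 3 (by decide)
  have z30 : A 3 0 = 0 := hz 3 0 (by decide)
  have z14 : A 1 4 = 0 := hz 1 4 (by decide)
  have z41 : A 4 1 = 0 := hz 4 1 (by decide)
  have z04 : A 0 4 = 0 := hz 0 4 (by decide)
  have z40 : A 4 0 = 0 := hz 4 0 (by decide)
  set b0 : ℂ := (2:ℂ)⁻¹ * (Complex.exp (θ*Complex.I) * A 0 1 + (starRingEnd ℂ) (Complex.exp (θ*Complex.I) * A 1 0)) with hb0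
  set b1 : ℂ := (2:ℂ)⁻¹ * (Complex.exp (θ*Complex.I) * A 1 2 + (starRingEnd ℂ) (Complex.exp (θ*Complex.I) * A 2 1)) with hb1
  set b2 : ℂ := (2:ℂ)⁻¹ * (Complex.exp (θ*Complex.I) * A 2 3 + (starRingEnd ℂ) (Complex.exp (θ*Complex.I) * A 3 2)) with hb2
  set b3 : ℂ := (2:ℂ)⁻¹ * (Complex.exp (θ*Complex.I) * A 3 4 + (starRingEnd ℂ) (Complex.exp (θ*Complex.I) * A 4 3)) with hb3
  have hM : RePart θ A - (lam : ℂ) • 1 =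
      !![-(lam:ℂ), b0, 0, 0, 0;
         (starRingEnd ℂ) b0, -(lam:ℂ), b1, 0, 0;
         0, (starRingEnd ℂ) b1, -(lam:ℂ), b2, 0;
         0, 0, (starRingEnd ℂ) b2, -(lam:ℂ), b3;
         0, 0, 0, (starRingEnd ℂ) b3, -(lam:ℂ)] := by
    ext i j
    fin_cases i <;> fin_cases j <;>
      · simp [RePart, Matrix.one_apply, Matrix.sub_apply, Matrix.add_apply, Matrix.smul_apply,
          Matrix.conjTranspose_apply, smul_eq_mul, z00, z11, z22, z33, z44, z02, z20, z13, z31,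
          z24, z42, z03, z30, z14, z41, z04, z40, hb0, hb1, hb2, hb3, _root_.map_mul,
          _root_.map_add, map_inv₀, Complex.conj_conj, map_ofNat, Matrix.vecHead, Matrix.vecTail]
        try ring
  rw [hM, det5, hb0, hb1, hb2, hb3,
    mu θ (A 0 1) (A 1 0) (hp 0 1 rfl) ξ₁ h1,
    mu θ (A 1 2) (A 2 1) (hp 1 2 rfl) ξ₂ h2,
    mu θ (A 2 3) (A 3 2) (hp 2 3 rfl) ξ₃ h3,
    mu θ (A 3 4) (A 4 3) (hp 3 4 rfl) ξ₄ h4]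
  have key : (-lam^5 + lam^3*((ξ₁+Real.cos θ^2) + (ξ₂+Real.cos θ^2) + (ξ₃+Real.cos θ^2) + (ξ₄+Real.cos θ^2))
      - lam*((ξ₁+Real.cos θ^2)*(ξ₃+Real.cos θ^2) + (ξ₁+Real.cos θ^2)*(ξ₄+Real.cos θ^2)
        + (ξ₂+Real.cos θ^2)*(ξ₄+Real.cos θ^2)) : ℝ) =
      -lam * ((lam ^ 2 - (3 * Real.cos θ ^ 2 + (ξ₂ + ξ₃ + (ξ₁ + ξ₄) / 2))) *
            (lam ^ 2 - (Real.cos θ ^ 2 + (ξ₁ + ξ₄) / 2))) := by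
    rcases hcon with hc | hc
    · linear_combination (-lam*((ξ₃-ξ₂)/2 - (ξ₁-ξ₄)/4)) * hc
    · linear_combination (lam*(ξ₁-ξ₄)/4) * hc
  exact_mod_cast key
end
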